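/- Fix reals S_A>0, θ≥0, λ>0 and V>0. Then V ≤ v_th(λ,0) if and only if ν̂(V, S_A·S_M/(S_A+S_M)) + λ·(1+θ·S_M) ≥ V for every S_M ≥ 0. -/

import Mathlib

/-- Posterior variance update: `ν̂(V,Λ) = V/(1+V·Λ)`. -/
noncomputable def nuhat (V Lam : ℝ) : ℝ := V / (1 + V * Lam)

/-- The threshold `v_th(λ,0)`. -/
noncomputable def vth0 (SA th lam : ℝ) : ℝ :=
  Real.sqrt (lam * th) + lam / 2 +
    Real.sqrt lam * Real.sqrt (Real.sqrt (lam * th) + lam / 4 + 1 / SA)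

/-- `V ≤ v_th(λ,0)` iff activating a single sensor never pays
off myopically: `ν̂(V, S_A·S_M/(S_A+S_M)) + λ·(1+θ·S_M) ≥ V` for all `S_M ≥ 0`. -/
theorem stmt_14 (SA th lam V : ℝ) (hSA : 0 < SA) (hth : 0 ≤ th)
    (hlam : 0 < lam) (hV : 0 < V) :
    V ≤ vth0 SA th lam ↔
      ∀ SM : ℝ, 0 ≤ SM →
        nuhat V (SA * SM / (SA + SM)) + lam * (1 + th * SM) ≥ V := by
  obtain ⟨q, hqdef⟩ : ∃ x : ℝ, x = lam / SA := ⟨_, rfl⟩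
  have hq : 0 < q := by rw [hqdef]; positivity
  have hqSA : q * SA = lam := by rw [hqdef]; field_simp
  obtain ⟨t, ht⟩ : ∃ x : ℝ, x = Real.sqrt (lam * th) := ⟨_, rfl⟩
  have ht0 : 0 ≤ t := ht ▸ Real.sqrt_nonneg _
  have ht2 : t ^ 2 = lam * th := by rw [ht]; exact Real.sq_sqrt (by positivity)
  obtain ⟨s, hs⟩ : ∃ x : ℝ, x = Real.sqrt (lam / SA + lam * V) := ⟨_, rfl⟩
  have hs0 : 0 ≤ s := hs ▸ Real.sqrt_nonneg _
  have hs2 : s ^ 2 = q + lam * V := by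
    rw [hs, Real.sq_sqrt (by positivity), hqdef]
  obtain ⟨w, hw⟩ : ∃ x : ℝ, x = Real.sqrt lam * Real.sqrt (t + lam / 4 + 1 / SA) := ⟨_, rfl⟩
  have hw0 : 0 ≤ w := by rw [hw]; positivity
  have hw2 : w ^ 2 = lam * t + lam ^ 2 / 4 + q := by
    rw [hw, mul_pow, Real.sq_sqrt hlam.le,
      Real.sq_sqrt (by positivity : (0:ℝ) ≤ t + lam / 4 + 1 / SA), hqdef]
    field_simp
  have hwhalf : lam / 2 ≤ w := by
    have h1 : (lam / 2) ^ 2 ≤ w ^ 2 := by nlinarith [mul_nonneg hlam.le ht0, hq]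
    exact le_of_pow_le_pow_left₀ two_ne_zero hw0 h1
  have step1 : V ≤ vth0 SA th lam ↔ V ≤ t + s := by
    have hv : vth0 SA th lam = t + lam / 2 + w := by
      unfold vth0; rw [← ht, ← hw]
    rw [hv]
    constructor
    · intro h
      rcases le_or_gt V t with h' | h'
      · linarith
      · have h2 : (V - t) ^ 2 ≤ s ^ 2 := by
          nlinarith [mul_nonneg (by linarith : (0:ℝ) ≤ w - (V - (t + lam / 2)))
            (by linarith : (0:ℝ) ≤ w + (V - (t + lam / 2))), hw2, hs2]
        have h3 : V - t ≤ s := le_of_pow_le_pow_left₀ two_ne_zero hs0 h2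
        linarith
    · intro h
      have h1 : (s - lam / 2) ^ 2 ≤ w ^ 2 := by
        nlinarith [hs2, hw2, mul_le_mul_of_nonneg_left h hlam.le]
      have h2 : s - lam / 2 ≤ w := le_of_pow_le_pow_left₀ two_ne_zero hw0 h1
      linarith
  rw [step1]
  have ha0 : 0 ≤ lam * th * (1 + V * SA) := by positivity
  have hc0 : (0:ℝ) < lam * SA := by positivity
  have hkey : ∀ SM : ℝ, 0 ≤ SM →
      ((nuhat V (SA * SM / (SA + SM)) + lam * (1 + th * SM) ≥ V) ↔
        0 ≤ lam * th * (1 + V * SA) * SM ^ 2 +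
          (lam * (1 + V * SA) + lam * th * SA - V ^ 2 * SA) * SM + lam * SA) := by
    intro SM hSM
    have hD : 0 < SA + SM + V * SA * SM := by positivity
    have h2 : 0 < SA + SM := by positivity
    have hden : 1 + V * (SA * SM / (SA + SM)) = (SA + SM + V * SA * SM) / (SA + SM) := by
      field_simp
    have heq : nuhat V (SA * SM / (SA + SM)) + lam * (1 + th * SM) - V =
        (lam * th * (1 + V * SA) * SM ^ 2 +
          (lam * (1 + V * SA) + lam * th * SA - V ^ 2 * SA) * SM + lam * SA)
          / (SA + SM + V * SA * SM) := by
      rw [nuhat, hden, div_div_eq_mul_div, eq_div_iff hD.ne']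
      field_simp
      ring
    rw [ge_iff_le, ← sub_nonneg, heq, le_div_iff₀ hD, zero_mul]
  have hts2 : SA * s ^ 2 = lam + lam * V * SA := by
    rw [hs2]; linarith [hqSA, mul_comm SA q ▸ hqSA]
  have htt2 : SA * t ^ 2 = lam * th * SA := by rw [ht2]; ring
  have hac : Real.sqrt (lam * th * (1 + V * SA)) * Real.sqrt (lam * SA) = SA * (t * s) := by
    have h1 : (Real.sqrt (lam * th * (1 + V * SA)) * Real.sqrt (lam * SA)) ^ 2
        = (SA * (t * s)) ^ 2 := by
      rw [mul_pow, Real.sq_sqrt ha0, Real.sq_sqrt hc0.le, mul_pow, mul_pow, ht2, hs2,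
        hqdef]
      field_simp
    have h2 : 0 ≤ Real.sqrt (lam * th * (1 + V * SA)) * Real.sqrt (lam * SA) := by positivity
    have h3 : 0 ≤ SA * (t * s) := by positivity
    exact (pow_left_inj₀ h2 h3 two_ne_zero).mp h1
  constructor
  · intro hK SM hSM
    rw [hkey SM hSM]
    have hVsq : V ^ 2 ≤ (t + s) ^ 2 := pow_le_pow_left₀ hV.le hK 2
    have key1 : SA * V ^ 2 ≤ SA * t ^ 2 + 2 * (SA * (t * s)) + SA * s ^ 2 := by
      calc SA * V ^ 2 ≤ SA * (t + s) ^ 2 := mul_le_mul_of_nonneg_left hVsq hSA.le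
        _ = SA * t ^ 2 + 2 * (SA * (t * s)) + SA * s ^ 2 := by ring
    have hb : -(2 * (SA * (t * s))) ≤ lam * (1 + V * SA) + lam * th * SA - V ^ 2 * SA := by
      linarith [key1, htt2, hts2]
    have e3 : lam * th * (1 + V * SA) * SM ^ 2 = (Real.sqrt (lam * th * (1 + V * SA)) * SM) ^ 2 := by
      rw [mul_pow, Real.sq_sqrt ha0]
    have e4 : lam * SA = Real.sqrt (lam * SA) ^ 2 := (Real.sq_sqrt hc0.le).symm
    have e5 : Real.sqrt (lam * th * (1 + V * SA)) * Real.sqrt (lam * SA) * SM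
        = SA * (t * s) * SM := by rw [hac]
    linarith [sq_nonneg (Real.sqrt (lam * th * (1 + V * SA)) * SM - Real.sqrt (lam * SA)),
      e3, e4, e5, mul_le_mul_of_nonneg_right hb hSM]
  · intro H
    by_contra hcon
    push_neg at hcon
    have hVsq : (t + s) ^ 2 < V ^ 2 := by
      have := pow_lt_pow_left₀ hcon (by positivity : (0:ℝ) ≤ t + s) two_ne_zero
      exact this
    have key1 : SA * t ^ 2 + 2 * (SA * (t * s)) + SA * s ^ 2 < SA * V ^ 2 := by
      calc SA * t ^ 2 + 2 * (SA * (t * s)) + SA * s ^ 2 = SA * (t + s) ^ 2 := by ring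
        _ < SA * V ^ 2 := mul_lt_mul_of_pos_left hVsq hSA
    have hb : lam * (1 + V * SA) + lam * th * SA - V ^ 2 * SA < -(2 * (SA * (t * s))) := by
      linarith [key1, htt2, hts2]
    rcases eq_or_lt_of_le hth with hth0 | hth0
    · have ht' : t = 0 := by rw [ht, ← hth0, mul_zero, Real.sqrt_zero]
      have hb' : lam * (1 + V * SA) + lam * th * SA - V ^ 2 * SA < 0 := by
        rw [ht'] at hb; linarith [hb]
      set B := lam * (1 + V * SA) + lam * th * SA - V ^ 2 * SA with hB
      have hSMpos : 0 < 2 * (lam * SA) / (-B) := div_pos (by linarith) (by linarith)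
      have hf := (hkey _ hSMpos.le).mp (H _ hSMpos.le)
      have ha' : lam * th * (1 + V * SA) = 0 := by rw [← hth0]; ring
      have hbSM : B * (2 * (lam * SA) / (-B)) = -(2 * (lam * SA)) := by
        rw [mul_div_assoc', div_neg, mul_comm B, mul_div_assoc, div_self (ne_of_lt hb'), mul_one]
      rw [ha', hbSM] at hf
      linarith [hf, hc0]
    · have ha' : 0 < lam * th * (1 + V * SA) := by positivity
      have hsa : 0 < Real.sqrt (lam * th * (1 + V * SA)) := Real.sqrt_pos.mpr ha'
      have hsc : 0 < Real.sqrt (lam * SA) := Real.sqrt_pos.mpr hc0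
      have hSMpos : 0 < Real.sqrt (lam * SA) / Real.sqrt (lam * th * (1 + V * SA)) :=
        div_pos hsc hsa
      set SM := Real.sqrt (lam * SA) / Real.sqrt (lam * th * (1 + V * SA)) with hSMdef
      have hf := (hkey SM hSMpos.le).mp (H SM hSMpos.le)
      have h1 : lam * th * (1 + V * SA) * SM ^ 2 = lam * SA := by
        rw [hSMdef, div_pow, Real.sq_sqrt hc0.le, Real.sq_sqrt ha0]
        field_simp
      have h2 : SA * (t * s) * SM = lam * SA := by
        rw [← hac, hSMdef]
        calc Real.sqrt (lam * th * (1 + V * SA)) * Real.sqrt (lam * SA) *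
              (Real.sqrt (lam * SA) / Real.sqrt (lam * th * (1 + V * SA)))
            = (Real.sqrt (lam * SA) * Real.sqrt (lam * SA)) *
              (Real.sqrt (lam * th * (1 + V * SA)) / Real.sqrt (lam * th * (1 + V * SA))) := by
              ring
          _ = lam * SA * 1 := by rw [Real.mul_self_sqrt hc0.le, div_self hsa.ne']
          _ = lam * SA := mul_one _
      have h3 : (lam * (1 + V * SA) + lam * th * SA - V ^ 2 * SA) * SM
          < -(2 * (SA * (t * s))) * SM := mul_lt_mul_of_pos_right hb hSMpos
      linarith [hf, h1, h2, h3]
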